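/- Let m ≥ 4 be even. For distinct elements x, y, a₁, …, a_{m−2}, the product of the two m-cycles (y a₁ x a₂ a₃ ⋯ a_{m−2}) and (y x a₁ a₂ ⋯ a_{m−2}) equals the (m−1)-cycle (y a₂ a₄ ⋯ a_{m−2} a₁ a₃ ⋯ a_{m−3}). -/

import Mathlib

theorem aux9 (d x y : ℕ) (a : ℕ → ℕ)
    (hnd : (x :: y :: (List.range (2*d+2)).map (fun i => a (i + 1))).Nodup) :
    (y :: a 1 :: x :: (List.range (2*d+1)).map (fun i => a (i + 2))).formPerm *
      (y :: x :: (List.range (2*d+2)).map (fun i => a (i + 1))).formPerm =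
    (y :: ((List.range (d+1)).map (fun i => a (2 * i + 2)) ++
      (List.range (d+1)).map (fun i => a (2 * i + 1)))).formPerm := by
  have hnd0 := hnd
  simp only [List.nodup_cons, List.mem_cons, List.mem_map, List.mem_range,
    List.nodup_map_iff_inj_on List.nodup_range] at hnd
  obtain ⟨h1, h2, hinj⟩ := hnd
  push_neg at h1 h2
  obtain ⟨hxy, hax⟩ := h1
  have hay : ∀ i < 2*d+2, a (i+1) ≠ y := h2
  -- Nodup facts
  have nd2 : (y :: x :: (List.range (2*d+2)).map (fun i => a (i + 1))).Nodup :=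
    (List.Perm.swap y x _).nodup hnd0
  have hsplit : (List.range (2*d+2)).map (fun i => a (i + 1))
      = a 1 :: (List.range (2*d+1)).map (fun i => a (i + 2)) := by
    rw [show 2*d+2 = (2*d+1)+1 from rfl, List.range_succ_eq_map]
    simp [List.map_map, Function.comp]
  have nd1 : (y :: a 1 :: x :: (List.range (2*d+1)).map (fun i => a (i + 2))).Nodup := by
    have h : (y :: x :: a 1 :: (List.range (2*d+1)).map (fun i => a (i + 2))).Nodup := by
      rwa [hsplit] at nd2
    exact ((List.Perm.swap (a 1) x _).cons y).nodup h
  have ndR : (y :: ((List.range (d+1)).map (fun i => a (2 * i + 2)) ++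
      (List.range (d+1)).map (fun i => a (2 * i + 1)))).Nodup := by
    simp only [List.nodup_cons, List.mem_append, List.mem_map, List.mem_range,
      List.nodup_append, List.nodup_map_iff_inj_on List.nodup_range, List.disjoint_left,
      List.mem_map, List.mem_range]
    refine ⟨?_, ?_, ?_, ?_⟩
    · rintro (⟨i, hi, h⟩ | ⟨i, hi, h⟩)
      · exact hay (2*i+1) (by omega) (by rw [show 2*i+1+1 = 2*i+2 from rfl]; exact h) |>.elim
      · exact hay (2*i) (by omega) (by rw [show 2*i+1 = 2*i+1 from rfl]; exact h) |>.elim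
    · intro i hi j hj h
      have := hinj (2*i+1) (by omega) (2*j+1) (by omega)
        (by simpa [show 2*i+1+1=2*i+2 from rfl, show 2*j+1+1=2*j+2 from rfl] using h)
      omega
    · intro i hi j hj h
      have := hinj (2*i) (by omega) (2*j) (by omega) (by simpa using h)
      omega
    · rintro z ⟨i, hi, rfl⟩ _ ⟨j, hj, h⟩ rfl
      have := hinj (2*j) (by omega) (2*i+1) (by omega)
        (by simpa [show 2*i+1+1=2*i+2 from rfl] using h)
      omega
  set L1 := y :: a 1 :: x :: (List.range (2*d+1)).map (fun i => a (i + 2)) with hL1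
  set L2 := y :: x :: (List.range (2*d+2)).map (fun i => a (i + 1)) with hL2
  set R := y :: ((List.range (d+1)).map (fun i => a (2 * i + 2)) ++
      (List.range (d+1)).map (fun i => a (2 * i + 1))) with hR
  have len1 : L1.length = 2*d+4 := by simp [hL1]
  have len2 : L2.length = 2*d+4 := by simp [hL2]
  have lenR : R.length = 2*d+3 := by simp [hR]; omega
  -- evaluation facts for L2
  have s0 : L2.formPerm y = x := by
    simpa [hL2] using List.formPerm_apply_lt_getElem L2 nd2 0 (by omega)
  have sx : L2.formPerm x = a 1 := by
    simpa [hL2] using List.formPerm_apply_lt_getElem L2 nd2 1 (by omega)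
  have s_mid : ∀ j, 1 ≤ j → j ≤ 2*d+1 → L2.formPerm (a j) = a (j+1) := by
    intro j hj1 hj2
    obtain ⟨i, rfl⟩ : ∃ i, j = i+1 := ⟨j-1, by omega⟩
    simpa [hL2] using List.formPerm_apply_lt_getElem L2 nd2 (i+2) (by omega)
  have s_last : L2.formPerm (a (2*d+2)) = y := by
    have h := List.formPerm_apply_getElem L2 nd2 (2*d+3) (by omega)
    have hmod : (2*d+3+1) % L2.length = 0 := by
      rw [len2, show 2*d+3+1 = 2*d+4 from by ring, Nat.mod_self]
    simp only [hmod] at h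
    simpa [hL2] using h
  -- evaluation facts for L1
  have t0 : L1.formPerm y = a 1 := by
    simpa [hL1] using List.formPerm_apply_lt_getElem L1 nd1 0 (by omega)
  have t1 : L1.formPerm (a 1) = x := by
    simpa [hL1] using List.formPerm_apply_lt_getElem L1 nd1 1 (by omega)
  have tx : L1.formPerm x = a 2 := by
    simpa [hL1] using List.formPerm_apply_lt_getElem L1 nd1 2 (by omega)
  have t_mid : ∀ j, 2 ≤ j → j ≤ 2*d+1 → L1.formPerm (a j) = a (j+1) := by
    intro j hj1 hj2
    obtain ⟨i, rfl⟩ : ∃ i, j = i+2 := ⟨j-2, by omega⟩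
    simpa [hL1] using List.formPerm_apply_lt_getElem L1 nd1 (i+3) (by omega)
  have t_last : L1.formPerm (a (2*d+2)) = y := by
    have h := List.formPerm_apply_getElem L1 nd1 (2*d+3) (by omega)
    have hmod : (2*d+3+1) % L1.length = 0 := by
      rw [len1, show 2*d+3+1 = 2*d+4 from by ring, Nat.mod_self]
    simp only [hmod] at h
    simpa [hL1] using h
  -- getElem facts for R
  have hgetE : ∀ i (h : i < R.length), i ≠ 0 → i < d+2 → R[i] = a (2*(i-1)+2) := by
    intro i h h0 hlt
    obtain ⟨j, rfl⟩ : ∃ j, i = j+1 := ⟨i-1, by omega⟩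
    simp only [hR, List.getElem_cons_succ, List.getElem_append, List.length_map,
      List.length_range, List.getElem_map, List.getElem_range]
    rw [dif_pos (by omega)]
    simp
  have hgetO : ∀ i (h : i < R.length), d+2 ≤ i → R[i] = a (2*(i-d-2)+1) := by
    intro i h h0
    obtain ⟨j, rfl⟩ : ∃ j, i = j+1 := ⟨i-1, by omega⟩
    simp only [hR, List.getElem_cons_succ, List.getElem_append, List.length_map,
      List.length_range, List.getElem_map, List.getElem_range]
    rw [dif_neg (by omega)]
    congr 2
    omega
  have hget0 : ∀ (h : 0 < R.length), R[0] = y := by intro h; simp [hR]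
  -- evaluation facts for R
  have r_y : R.formPerm y = a 2 := by
    have h := List.formPerm_apply_lt_getElem R ndR 0 (by omega)
    rw [hget0, hgetE (0+1) (by omega) (by omega) (by omega)] at h
    simpa using h
  have r_even : ∀ c, c < d → R.formPerm (a (2*c+2)) = a (2*c+4) := by
    intro c hc
    have h := List.formPerm_apply_lt_getElem R ndR (c+1) (by omega)
    rw [hgetE (c+1) (by omega) (by omega) (by omega),
        hgetE (c+1+1) (by omega) (by omega) (by omega)] at h
    rw [show 2*(c+1-1)+2 = 2*c+2 from by omega, show 2*(c+1+1-1)+2 = 2*c+4 from by omega] at h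
    exact h
  have r_evlast : R.formPerm (a (2*d+2)) = a 1 := by
    have h := List.formPerm_apply_lt_getElem R ndR (d+1) (by omega)
    rw [hgetE (d+1) (by omega) (by omega) (by omega),
        hgetO (d+1+1) (by omega) (by omega)] at h
    rw [show 2*(d+1-1)+2 = 2*d+2 from by omega, show 2*(d+1+1-d-2)+1 = 1 from by omega] at h
    exact h
  have r_odd : ∀ c, c < d → R.formPerm (a (2*c+1)) = a (2*c+3) := by
    intro c hc
    have h := List.formPerm_apply_lt_getElem R ndR (d+2+c) (by omega)
    rw [hgetO (d+2+c) (by omega) (by omega),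
        hgetO (d+2+c+1) (by omega) (by omega)] at h
    rw [show 2*(d+2+c-d-2)+1 = 2*c+1 from by omega,
        show 2*(d+2+c+1-d-2)+1 = 2*c+3 from by omega] at h
    exact h
  have r_oddlast : R.formPerm (a (2*d+1)) = y := by
    have h := List.formPerm_apply_getElem R ndR (2*d+2) (by omega)
    have hmod : (2*d+2+1) % R.length = 0 := by
      rw [lenR, show 2*d+2+1 = 2*d+3 from by ring, Nat.mod_self]
    simp only [hmod] at h
    rw [hgetO (2*d+2) (by omega) (by omega), hget0] at h
    rw [show 2*(2*d+2-d-2)+1 = 2*d+1 from by omega] at h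
    exact h
  have r_x : R.formPerm x = x := by
    apply List.formPerm_apply_of_notMem
    simp only [hR, List.mem_cons, List.mem_append, List.mem_map, List.mem_range]
    push_neg
    refine ⟨hxy, ?_, ?_⟩
    · intro i hi hh; exact hax (2*i+1) (by omega) hh
    · intro i hi hh; exact hax (2*i) (by omega) hh
  -- main extensionality argument
  ext z
  rw [Equiv.Perm.mul_apply]
  by_cases hz : z ∈ L2
  · simp only [hL2, List.mem_cons, List.mem_map, List.mem_range] at hz
    rcases hz with rfl | rfl | ⟨i, hi, rfl⟩
    · rw [s0, tx, r_y]
    · rw [sx, t1, r_x]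
    · rcases Nat.even_or_odd i with ⟨c, hc⟩ | ⟨c, hc⟩
      · -- i = c + c, a (i+1) = a (2c+1)
        have hcd : c ≤ d := by omega
        rw [show i+1 = 2*c+1 from by omega]
        rcases lt_or_ge c d with hcd' | hcd'
        · rw [s_mid (2*c+1) (by omega) (by omega), show 2*c+1+1 = 2*c+2 from by ring,
            t_mid (2*c+2) (by omega) (by omega), show 2*c+2+1 = 2*c+3 from by ring,
            r_odd c (by omega)]
        · have : c = d := by omega
          subst this
          rw [s_mid (2*c+1) (by omega) (by omega), show 2*c+1+1 = 2*c+2 from by ring,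
            t_last, r_oddlast]
      · -- i = 2c+1, a (i+1) = a (2c+2)
        have hcd : c ≤ d := by omega
        rw [show i+1 = 2*c+2 from by omega]
        rcases lt_or_ge c d with hcd' | hcd'
        · rw [s_mid (2*c+2) (by omega) (by omega), show 2*c+2+1 = 2*c+3 from by ring,
            t_mid (2*c+3) (by omega) (by omega), show 2*c+3+1 = 2*c+4 from by ring,
            r_even c (by omega)]
        · have : c = d := by omega
          subst this
          rw [show 2*c+2 = 2*c+2 from rfl, s_last, t0, r_evlast]
  · have hz1 : z ∉ L1 := by
      intro hmem
      apply hz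
      simp only [hL1, List.mem_cons, List.mem_map, List.mem_range] at hmem
      simp only [hL2, List.mem_cons, List.mem_map, List.mem_range]
      rcases hmem with rfl | rfl | rfl | ⟨i, hi, rfl⟩
      · exact Or.inl rfl
      · exact Or.inr (Or.inr ⟨0, by omega, rfl⟩)
      · exact Or.inr (Or.inl rfl)
      · exact Or.inr (Or.inr ⟨i+1, by omega, rfl⟩)
    have hzR : z ∉ R := by
      intro hmem
      apply hz
      simp only [hR, List.mem_cons, List.mem_append, List.mem_map, List.mem_range] at hmem
      simp only [hL2, List.mem_cons, List.mem_map, List.mem_range]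
      rcases hmem with rfl | ⟨i, hi, rfl⟩ | ⟨i, hi, rfl⟩
      · exact Or.inl rfl
      · exact Or.inr (Or.inr ⟨2*i+1, by omega, by rw [show 2*i+1+1 = 2*i+2 from rfl]⟩)
      · exact Or.inr (Or.inr ⟨2*i, by omega, rfl⟩)
    rw [List.formPerm_apply_of_notMem hz, List.formPerm_apply_of_notMem hz1,
      List.formPerm_apply_of_notMem hzR]

theorem stmt9 (m : ℕ) (hm : 4 ≤ m) (heven : Even m)
    (x y : ℕ) (a : ℕ → ℕ)
    (hnd : (x :: y :: (List.range (m - 2)).map (fun i => a (i + 1))).Nodup) :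
    (y :: a 1 :: x :: (List.range (m - 3)).map (fun i => a (i + 2))).formPerm *
      (y :: x :: (List.range (m - 2)).map (fun i => a (i + 1))).formPerm =
    (y :: ((List.range ((m - 2) / 2)).map (fun i => a (2 * i + 2)) ++
      (List.range ((m - 2) / 2)).map (fun i => a (2 * i + 1)))).formPerm := by
  obtain ⟨k, hk⟩ := heven
  have hd : ∃ d, m = 2*d+4 := ⟨k - 2, by omega⟩
  obtain ⟨d, rfl⟩ := hd
  rw [show 2*d+4-2 = 2*d+2 from by omega] at hnd
  rw [show 2*d+4-2 = 2*d+2 from by omega, show 2*d+4-3 = 2*d+1 from by omega,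
    show (2*d+2)/2 = d+1 from by omega]
  exact aux9 d x y a hnd
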